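/- Assume in addition that L_0 is differentiable on [0,∞). Then every L_n is differentiable on [0,∞) and its derivative at 0 satisfies L_n'(0) = L_0'(0) / p_n for all n ≥ 1; equivalently, the mean time between overflows from the first n servers is E T_n = −L_n'(0) = (−L_0'(0)) / p_n = 1/(λ p_n) when −L_0'(0) = 1/λ. -/

import Mathlib

open Filter

/-- The recursively defined overflow Laplace–Stieltjes transforms:
`ovLST L0 ms 0 = L0` and
`ovLST L0 ms n s = L_{n-1}(μ_n + s) / (1 - L_{n-1}(s) + L_{n-1}(μ_n + s))`. -/
noncomputable def ovLST (L0 : ℝ → ℝ) (ms : ℕ → ℝ) : ℕ → ℝ → ℝ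
  | 0 => L0
  | n + 1 => fun s =>
      ovLST L0 ms n (ms (n + 1) + s) /
        (1 - ovLST L0 ms n s + ovLST L0 ms n (ms (n + 1) + s))

/-- The blocking probability of the first `n` servers: `p_n = ∏_{i=1}^n L_{i-1}(μ_i)`. -/
noncomputable def blockP (L0 : ℝ → ℝ) (ms : ℕ → ℝ) (n : ℕ) : ℝ :=
  ∏ i ∈ Finset.Icc 1 n, ovLST L0 ms (i - 1) (ms i)

lemma blockP_succ (L0 : ℝ → ℝ) (ms : ℕ → ℝ) (n : ℕ) :
    blockP L0 ms (n + 1) = blockP L0 ms n * ovLST L0 ms n (ms (n + 1)) := by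
  unfold blockP
  rw [Finset.prod_Icc_succ_top (by omega : 1 ≤ n + 1)]
  simp

lemma ovLST_key
    (ms : ℕ → ℝ)
    (hms : ∀ n, 1 ≤ n → 0 < ms n)
    (L0 : ℝ → ℝ) (hL00 : L0 0 = 1)
    (hL0pos : ∀ s, 0 ≤ s → 0 < L0 s)
    (hL0anti : StrictAntiOn L0 (Set.Ici 0))
    (hdiff : DifferentiableOn ℝ L0 (Set.Ici 0)) :
    ∀ n, (ovLST L0 ms n) 0 = 1 ∧
      (∀ s, 0 ≤ s → 0 < ovLST L0 ms n s ∧ ovLST L0 ms n s ≤ 1) ∧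
      DifferentiableOn ℝ (ovLST L0 ms n) (Set.Ici 0) ∧
      0 < blockP L0 ms n ∧
      derivWithin (ovLST L0 ms n) (Set.Ici 0) 0 =
        derivWithin L0 (Set.Ici 0) 0 / blockP L0 ms n := by
  intro n
  induction n with
  | zero =>
    refine ⟨hL00, fun s hs => ⟨hL0pos s hs, ?_⟩, hdiff, by simp [blockP], by simp [blockP, ovLST]⟩
    · show ovLST L0 ms 0 s ≤ 1
      have : L0 s ≤ L0 0 := hL0anti.antitoneOn Set.self_mem_Ici hs hs
      simpa [ovLST, hL00] using this
  | succ n ih =>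
    obtain ⟨h0, hpos, hdf, hpP, hder⟩ := ih
    set f := ovLST L0 ms n with hf
    set μn := ms (n + 1) with hμn
    have hμnpos : 0 < μn := hms (n + 1) (by omega)
    have hℓpos : 0 < f μn := (hpos μn hμnpos.le).1
    -- denominator positivity
    have hden : ∀ s, 0 ≤ s → 0 < 1 - f s + f (μn + s) := by
      intro s hs
      have h1 := (hpos s hs).2
      have h2 := (hpos (μn + s) (by linarith)).1
      linarith
    -- value at 0
    have hval0 : ovLST L0 ms (n + 1) 0 = 1 := by
      show f (μn + 0) / (1 - f 0 + f (μn + 0)) = 1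
      rw [h0]
      simp only [sub_self, zero_add, add_zero]
      exact div_self hℓpos.ne'
    -- maps-to for shift
    have hmaps : Set.MapsTo (fun s => μn + s) (Set.Ici (0:ℝ)) (Set.Ici 0) := by
      intro s hs
      simp only [Set.mem_Ici] at *
      linarith
    have hshift : DifferentiableOn ℝ (fun s => f (μn + s)) (Set.Ici 0) := by
      exact hdf.comp ((differentiableOn_id.const_add μn)) hmaps
    have hdenD : DifferentiableOn ℝ (fun s => 1 - f s + f (μn + s)) (Set.Ici 0) :=
      ((differentiableOn_const 1).sub hdf).add hshift
    have hdiff1 : DifferentiableOn ℝ (ovLST L0 ms (n + 1)) (Set.Ici 0) := by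
      show DifferentiableOn ℝ (fun s => f (μn + s) / (1 - f s + f (μn + s))) (Set.Ici 0)
      exact hshift.div hdenD (fun s hs => (hden s hs).ne')
    -- bounds
    have hbdd : ∀ s, 0 ≤ s → 0 < ovLST L0 ms (n + 1) s ∧ ovLST L0 ms (n + 1) s ≤ 1 := by
      intro s hs
      have h2 := (hpos (μn + s) (by linarith)).1
      have h1 := (hpos s hs).2
      show 0 < f (μn + s) / (1 - f s + f (μn + s)) ∧
        f (μn + s) / (1 - f s + f (μn + s)) ≤ 1
      constructor
      · exact div_pos h2 (hden s hs)
      · rw [div_le_one (hden s hs)]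
        linarith
    -- derivative at 0
    have hU : UniqueDiffWithinAt ℝ (Set.Ici (0:ℝ)) 0 := uniqueDiffOn_Ici 0 0 Set.self_mem_Ici
    set d0 := derivWithin f (Set.Ici 0) 0 with hd0
    set dμ := derivWithin f (Set.Ici 0) μn with hdμ
    have hfd0 : HasDerivWithinAt f d0 (Set.Ici 0) 0 :=
      (hdf 0 Set.self_mem_Ici).hasDerivWithinAt
    have hfdμ : HasDerivWithinAt f dμ (Set.Ici 0) μn :=
      (hdf μn (Set.mem_Ici.2 hμnpos.le)).hasDerivWithinAt
    have hshiftd : HasDerivWithinAt (fun s => f (μn + s)) dμ (Set.Ici 0) 0 := by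
      have hid : HasDerivWithinAt (fun s : ℝ => μn + s) 1 (Set.Ici 0) 0 := by
        simpa using ((hasDerivWithinAt_id (0:ℝ) (Set.Ici 0)).const_add μn)
      have := HasDerivWithinAt.scomp (0:ℝ) (by simpa using hfdμ) hid hmaps
      rw [one_smul] at this
      exact this
    have hdend : HasDerivWithinAt (fun s => 1 - f s + f (μn + s)) (-d0 + dμ)
        (Set.Ici 0) 0 := by
      have : HasDerivWithinAt (fun s => 1 - f s) (-d0) (Set.Ici 0) 0 := by
        exact hfd0.const_sub 1
      exact this.add hshiftd
    have hden0 : (fun s => 1 - f s + f (μn + s)) 0 = f μn := by simp [h0]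
    have hquot : HasDerivWithinAt (ovLST L0 ms (n + 1))
        ((dμ * f μn - f (μn + 0) * (-d0 + dμ)) / (f μn) ^ 2) (Set.Ici 0) 0 := by
      have := HasDerivWithinAt.div hshiftd hdend (by show 1 - f 0 + f (μn + 0) ≠ 0; simp [h0]; exact hℓpos.ne')
      simp only [h0, add_zero, sub_self, zero_add] at this ⊢
      exact this
    have hquot' : HasDerivWithinAt (ovLST L0 ms (n + 1)) (d0 / f μn) (Set.Ici 0) 0 := by
      convert hquot using 1
      have : (μn + 0) = μn := by ring
      rw [this]
      field_simp
      ring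
    have hderNew : derivWithin (ovLST L0 ms (n + 1)) (Set.Ici 0) 0 = d0 / f μn :=
      hquot'.derivWithin hU
    have hpP' : 0 < blockP L0 ms (n + 1) := by
      rw [blockP_succ]; exact mul_pos hpP hℓpos
    refine ⟨hval0, hbdd, hdiff1, hpP', ?_⟩
    rw [hderNew, hder, blockP_succ, div_div]

theorem stmt_11
    (μ : ℝ) (hμ : 0 < μ) (ms : ℕ → ℝ)
    (hms : ∀ n, 1 ≤ n → 0 < ms n)
    (hsum : HasSum (fun n => ms (n + 1)) μ)
    (L0 : ℝ → ℝ) (hL00 : L0 0 = 1)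
    (hL0pos : ∀ s, 0 ≤ s → 0 < L0 s)
    (hL0anti : StrictAntiOn L0 (Set.Ici 0))
    (hL0lim : Tendsto L0 atTop (nhds 0))
    (hdiff : DifferentiableOn ℝ L0 (Set.Ici 0)) :
    ∀ n, 1 ≤ n →
      DifferentiableOn ℝ (ovLST L0 ms n) (Set.Ici 0) ∧
      derivWithin (ovLST L0 ms n) (Set.Ici 0) 0 =
        derivWithin L0 (Set.Ici 0) 0 / blockP L0 ms n ∧
      (∀ lam : ℝ, 0 < lam → derivWithin L0 (Set.Ici 0) 0 = -(1 / lam) →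
        -derivWithin (ovLST L0 ms n) (Set.Ici 0) 0 = 1 / (lam * blockP L0 ms n)) := by
  intro n hn
  obtain ⟨_, _, hdf, hpP, hder⟩ := ovLST_key ms hms L0 hL00 hL0pos hL0anti hdiff n
  refine ⟨hdf, hder, fun lam hlam hL => ?_⟩
  rw [hder, hL]
  field_simp
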